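/- Let m : ℝ → ℝ be smooth with m(0) = 0 and let b₀, c₀, b₁, c₁, α, β ∈ ℝ satisfy b₁β + c₁α = 1 and β(β − b₀) = α(α + c₀). Define b(y) = b₀ + b₁·m′(y) and c(y) = c₀ + c₁·m′(y). Then for every smooth function u : ℝ² → ℝ (not necessarily a solution), the identity exp(αx + βt)·F[u] = ∂ₜ[ exp(αx + βt)·(∂ₜu − β·u + B(u)) ] + ∂ₓ[ exp(αx + βt)·(α·u − ∂ₓu + C(u)) ] holds on ℝ². In particular, exp(αx + βt) is a conservation law multiplier, and on every solution of F[u] = 0 the displayed current is divergence-free. -/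

import Mathlib

noncomputable section

open Real

/-- Partial derivative in the first (time) variable. -/
def Dt (u : ℝ → ℝ → ℝ) : ℝ → ℝ → ℝ := fun t x => deriv (fun s => u s x) t

/-- Partial derivative in the second (space) variable. -/
def Dx (u : ℝ → ℝ → ℝ) : ℝ → ℝ → ℝ := fun t x => deriv (fun s => u t s) x

/-- Smoothness (C^∞) of a function of two real variables. -/
def Smooth2 (u : ℝ → ℝ → ℝ) : Prop := ContDiff ℝ (⊤ : ℕ∞) (fun p : ℝ × ℝ => u p.1 p.2)
/-- The semilinear wave operator F[u] = ∂ₜ²u − ∂ₓ²u + b(u)∂ₜu + c(u)∂ₓu + m(u). -/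
def Fop (b c m : ℝ → ℝ) (u : ℝ → ℝ → ℝ) : ℝ → ℝ → ℝ := fun t x =>
  Dt (Dt u) t x - Dx (Dx u) t x + b (u t x) * Dt u t x + c (u t x) * Dx u t x + m (u t x)

/-- The adjoint linearized operator along u:
L*[u]q = ∂ₜ²q − ∂ₓ²q − b(u)∂ₜq − c(u)∂ₓq + m′(u)q. -/
def Lstar (b c m : ℝ → ℝ) (u q : ℝ → ℝ → ℝ) : ℝ → ℝ → ℝ := fun t x =>
  Dt (Dt q) t x - Dx (Dx q) t x - b (u t x) * Dt q t x - c (u t x) * Dx q t x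
    + deriv m (u t x) * q t x


private lemma auxDt (g : ℝ → ℝ → ℝ)
    (hg : Differentiable ℝ (fun p : ℝ × ℝ => g p.1 p.2)) (t x : ℝ) :
    HasDerivAt (fun s => g s x)
      (fderiv ℝ (fun p : ℝ × ℝ => g p.1 p.2) (t, x) (1, 0)) t := by
  have h1 : HasDerivAt (fun s : ℝ => (s, x)) ((1 : ℝ), (0 : ℝ)) t :=
    (hasDerivAt_id t).prodMk (hasDerivAt_const t x)
  have := ((hg (t, x)).hasFDerivAt).comp_hasDerivAt t h1
  simpa [Function.comp_def] using this

private lemma auxDx (g : ℝ → ℝ → ℝ)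
    (hg : Differentiable ℝ (fun p : ℝ × ℝ => g p.1 p.2)) (t x : ℝ) :
    HasDerivAt (fun s => g t s)
      (fderiv ℝ (fun p : ℝ × ℝ => g p.1 p.2) (t, x) (0, 1)) x := by
  have h1 : HasDerivAt (fun s : ℝ => (t, s)) ((0 : ℝ), (1 : ℝ)) x :=
    (hasDerivAt_const x t).prodMk (hasDerivAt_id x)
  have := ((hg (t, x)).hasFDerivAt).comp_hasDerivAt x h1
  simpa [Function.comp_def] using this

/-- exp(αx + βt) is a conservation law multiplier of the semilinear wave
equation with b = b₀ + b₁m′, c = c₀ + c₁m′, b₁β + c₁α = 1,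
β(β − b₀) = α(α + c₀). -/
theorem stmt_7
    (m : ℝ → ℝ) (hm : ContDiff ℝ (⊤ : ℕ∞) m) (hm0 : m 0 = 0)
    (b₀ c₀ b₁ c₁ α β : ℝ)
    (h1 : b₁ * β + c₁ * α = 1) (h2 : β * (β - b₀) = α * (α + c₀))
    (b c : ℝ → ℝ)
    (hbdef : ∀ y, b y = b₀ + b₁ * deriv m y)
    (hcdef : ∀ y, c y = c₀ + c₁ * deriv m y)
    (B C : ℝ → ℝ)
    (hB : ∀ y, B y = ∫ s in (0:ℝ)..y, b s)
    (hC : ∀ y, C y = ∫ s in (0:ℝ)..y, c s)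
    (u : ℝ → ℝ → ℝ) (hu : Smooth2 u) :
    (∀ t x : ℝ,
      Real.exp (α * x + β * t) * Fop b c m u t x =
        Dt (fun t x => Real.exp (α * x + β * t) * (Dt u t x - β * u t x + B (u t x))) t x
        + Dx (fun t x => Real.exp (α * x + β * t) * (α * u t x - Dx u t x + C (u t x))) t x)
    ∧ ((∀ t x, Fop b c m u t x = 0) →
      ∀ t x : ℝ,
        Dt (fun t x => Real.exp (α * x + β * t) * (Dt u t x - β * u t x + B (u t x))) t x
        + Dx (fun t x => Real.exp (α * x + β * t) * (α * u t x - Dx u t x + C (u t x))) t x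
          = 0) := by
  
  -- basic facts about m
  have hmd : Differentiable ℝ m := hm.differentiable (by simp)
  have hm' : Continuous (deriv m) := hm.continuous_deriv (by simp)
  -- explicit formulas for B and C
  have hBval : ∀ y, B y = b₀ * y + b₁ * m y := by
    intro y
    rw [hB]
    simp only [hbdef]
    rw [intervalIntegral.integral_add intervalIntegrable_const
        ((hm'.intervalIntegrable _ _).const_mul b₁),
      intervalIntegral.integral_const_mul,
      intervalIntegral.integral_deriv_eq_sub (fun s _ => hmd s)
        (hm'.intervalIntegrable _ _)]
    simp [hm0]
    ring
  have hCval : ∀ y, C y = c₀ * y + c₁ * m y := by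
    intro y
    rw [hC]
    simp only [hcdef]
    rw [intervalIntegral.integral_add intervalIntegrable_const
        ((hm'.intervalIntegrable _ _).const_mul c₁),
      intervalIntegral.integral_const_mul,
      intervalIntegral.integral_deriv_eq_sub (fun s _ => hmd s)
        (hm'.intervalIntegrable _ _)]
    simp [hm0]
    ring
  have hBd : ∀ y, HasDerivAt B (b y) y := by
    intro y
    have h : HasDerivAt (fun z => b₀ * z + b₁ * m z) (b₀ + b₁ * deriv m y) y := by
      have := ((hasDerivAt_id y).const_mul b₀).add ((hmd y).hasDerivAt.const_mul b₁)
      simpa [Pi.add_def] using this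
    rw [show B = fun z => b₀ * z + b₁ * m z from funext hBval, hbdef]
    exact h
  have hCd : ∀ y, HasDerivAt C (c y) y := by
    intro y
    have h : HasDerivAt (fun z => c₀ * z + c₁ * m z) (c₀ + c₁ * deriv m y) y := by
      have := ((hasDerivAt_id y).const_mul c₀).add ((hmd y).hasDerivAt.const_mul c₁)
      simpa [Pi.add_def] using this
    rw [show C = fun z => c₀ * z + c₁ * m z from funext hCval, hcdef]
    exact h
  -- partial derivatives of u
  have hu' : ContDiff ℝ (⊤ : ℕ∞) (fun p : ℝ × ℝ => u p.1 p.2) := hu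
  set ut : ℝ → ℝ → ℝ :=
    fun t x => fderiv ℝ (fun p : ℝ × ℝ => u p.1 p.2) (t, x) (1, 0) with hut_def
  set ux : ℝ → ℝ → ℝ :=
    fun t x => fderiv ℝ (fun p : ℝ × ℝ => u p.1 p.2) (t, x) (0, 1) with hux_def
  have hut2 : ContDiff ℝ (⊤ : ℕ∞) (fun p : ℝ × ℝ => ut p.1 p.2) :=
    (hu'.fderiv_right (by simp)).clm_apply contDiff_const
  have hux2 : ContDiff ℝ (⊤ : ℕ∞) (fun p : ℝ × ℝ => ux p.1 p.2) :=
    (hu'.fderiv_right (by simp)).clm_apply contDiff_const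
  have hud : ∀ t x : ℝ, HasDerivAt (fun s => u s x) (ut t x) t :=
    fun t x => auxDt u (hu'.differentiable (by simp)) t x
  have hud2 : ∀ t x : ℝ, HasDerivAt (fun s => u t s) (ux t x) x :=
    fun t x => auxDx u (hu'.differentiable (by simp)) t x
  set utt : ℝ → ℝ → ℝ :=
    fun t x => fderiv ℝ (fun p : ℝ × ℝ => ut p.1 p.2) (t, x) (1, 0) with hutt_def
  set uxx : ℝ → ℝ → ℝ :=
    fun t x => fderiv ℝ (fun p : ℝ × ℝ => ux p.1 p.2) (t, x) (0, 1) with huxx_def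
  have hutd : ∀ t x : ℝ, HasDerivAt (fun s => ut s x) (utt t x) t :=
    fun t x => auxDt ut (hut2.differentiable (by simp)) t x
  have huxd : ∀ t x : ℝ, HasDerivAt (fun s => ux t s) (uxx t x) x :=
    fun t x => auxDx ux (hux2.differentiable (by simp)) t x
  have hDtu : Dt u = ut := funext fun t => funext fun x => (hud t x).deriv
  have hDxu : Dx u = ux := funext fun t => funext fun x => (hud2 t x).deriv
  have hFop : ∀ t x : ℝ, Fop b c m u t x
      = utt t x - uxx t x + b (u t x) * ut t x + c (u t x) * ux t x + m (u t x) := by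
    intro t x
    simp only [Fop, hDtu, hDxu]
    rw [show Dt ut t x = utt t x from (hutd t x).deriv,
        show Dx ux t x = uxx t x from (huxd t x).deriv]
  have key : ∀ t x : ℝ,
      Dt (fun t x => Real.exp (α * x + β * t) * (Dt u t x - β * u t x + B (u t x))) t x
      + Dx (fun t x => Real.exp (α * x + β * t) * (α * u t x - Dx u t x + C (u t x))) t x
      = Real.exp (α * x + β * t) * Fop b c m u t x := by
    intro t x
    have heT : HasDerivAt (fun s => Real.exp (α * x + β * s))
        (Real.exp (α * x + β * t) * β) t := by
      have h0 : HasDerivAt (fun s : ℝ => α * x + β * s) β t := by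
        simpa using ((hasDerivAt_id t).const_mul β).const_add (α * x)
      simpa using h0.exp
    have heX : HasDerivAt (fun s => Real.exp (α * s + β * t))
        (Real.exp (α * x + β * t) * α) x := by
      have h0 : HasDerivAt (fun s : ℝ => α * s + β * t) α x := by
        simpa using ((hasDerivAt_id x).const_mul α).add_const (β * t)
      simpa using h0.exp
    have hg1 : HasDerivAt (fun s => ut s x - β * u s x + B (u s x))
        (utt t x - β * ut t x + b (u t x) * ut t x) t :=
      ((hutd t x).sub ((hud t x).const_mul β)).add ((hBd (u t x)).comp t (hud t x))
    have hg2 : HasDerivAt (fun s => α * u t s - ux t s + C (u t s))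
        (α * ux t x - uxx t x + c (u t x) * ux t x) x :=
      (((hud2 t x).const_mul α).sub (huxd t x)).add ((hCd (u t x)).comp x (hud2 t x))
    have eT : Dt (fun t x => Real.exp (α * x + β * t) * (Dt u t x - β * u t x + B (u t x))) t x
        = (Real.exp (α * x + β * t) * β) * (ut t x - β * u t x + B (u t x))
          + Real.exp (α * x + β * t) * (utt t x - β * ut t x + b (u t x) * ut t x) := by
      simp only [hDtu]; simp only [Dt]
      exact (heT.mul hg1).deriv
    have eX : Dx (fun t x => Real.exp (α * x + β * t) * (α * u t x - Dx u t x + C (u t x))) t x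
        = (Real.exp (α * x + β * t) * α) * (α * u t x - ux t x + C (u t x))
          + Real.exp (α * x + β * t) * (α * ux t x - uxx t x + c (u t x) * ux t x) := by
      simp only [hDxu]; simp only [Dx]
      exact (heX.mul hg2).deriv
    rw [eT, eX, hFop t x, hBval (u t x), hCval (u t x)]
    linear_combination (Real.exp (α * x + β * t) * m (u t x)) * h1
      + (-(Real.exp (α * x + β * t) * u t x)) * h2
  refine ⟨fun t x => (key t x).symm, fun hsol t x => ?_⟩
  rw [key t x, hsol t x, mul_zero]
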